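/- With T* and TD* as defined, TD*(k+c) ≥ T*(k) for all integers k ≥ n and c ≥ 2; moreover TD*(n+1) ≥ T*(n). -/

import Mathlib

/-- Total cost of consecutive steps of a finite sequence of vertices. -/
def chainCost {V : Type*} (c : V → V → ℝ) : List V → ℝ
  | [] => 0
  | [_] => 0
  | x :: y :: t => c x y + chainCost c (y :: t)

/-- A depot-free spanning revisit sequence with `v` visits, written as a list
`(u_0, ..., u_{v-1}, u_0)`: length `v+1`, cyclically closed, consecutive elements
distinct, all elements targets, covering all targets. -/
def IsRevSeqND {V : Type*} (N : Finset V) (v : ℕ) (l : List V) : Prop :=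
  l.length = v + 1 ∧ l.head? = l.getLast? ∧ l.Chain' (· ≠ ·) ∧
    (∀ x ∈ l, x ∈ N) ∧ (∀ t ∈ N, t ∈ l)

/-- A depot-containing spanning revisit sequence with `v` visits, written as a list
`(u_0, ..., u_{v-1}, u_0)`: starts and ends at the same target, consecutive elements
distinct, elements in `N ∪ {d}`, covering all targets, depot appearing exactly once. -/
def IsRevSeqD {V : Type*} [DecidableEq V] (N : Finset V) (d : V) (v : ℕ) (l : List V) : Prop :=
  l.length = v + 1 ∧ l.head? = l.getLast? ∧ l.Chain' (· ≠ ·) ∧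
    (∀ x ∈ l, x ∈ N ∨ x = d) ∧ (∀ t ∈ N, t ∈ l) ∧ l.count d = 1 ∧
    (∃ u ∈ N, l.head? = some u)

namespace TDaux

open List

variable {V : Type*}

lemma chainCost_cons_cons (c : V → V → ℝ) (x y : V) (t : List V) :
    chainCost c (x :: y :: t) = c x y + chainCost c (y :: t) := rfl

lemma chainCost_append_cons (c : V → V → ℝ) :
    ∀ (p : List V) (y : V) (ys : List V),
      chainCost c (p ++ y :: ys) = chainCost c (p ++ [y]) + chainCost c (y :: ys)
  | [], y, ys => by simp [chainCost]
  | [a], y, ys => by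
      simp only [List.cons_append, List.nil_append, chainCost_cons_cons]
      simp [chainCost]
  | a :: b :: p, y, ys => by
      have ih := chainCost_append_cons c (b :: p) y ys
      simp only [List.cons_append] at *
      rw [chainCost_cons_cons, chainCost_cons_cons, ih]
      ring

lemma cost_shortcut1 (c : V → V → ℝ) (htri : ∀ x y z, c x z ≤ c x y + c y z)
    (p q : List V) (a x b : V) :
    chainCost c (p ++ a :: b :: q) ≤ chainCost c (p ++ a :: x :: b :: q) := by
  rw [chainCost_append_cons c p a (b :: q), chainCost_append_cons c p a (x :: b :: q)]
  simp only [chainCost_cons_cons]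
  have := htri a x b
  linarith

lemma cost_shortcut2 (c : V → V → ℝ) (hnonneg : ∀ x y, 0 ≤ c x y)
    (p q : List V) (a x : V) :
    chainCost c (p ++ a :: q) ≤ chainCost c (p ++ a :: x :: a :: q) := by
  rw [chainCost_append_cons c p a q, chainCost_append_cons c p a (x :: a :: q)]
  simp only [chainCost_cons_cons]
  have h1 := hnonneg a x
  have h2 := hnonneg x a
  linarith

lemma head?_mid (p : List V) (a : V) (r s : List V) :
    (p ++ a :: r).head? = (p ++ a :: s).head? := by cases p <;> simp

lemma getLast?_mid (p s : List V) (b : V) (q : List V) :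
    (p ++ b :: q).getLast? = (s ++ b :: q).getLast? := by
  rw [List.getLast?_append, List.getLast?_append]
  obtain ⟨y, hy⟩ : ∃ y, (b :: q).getLast? = some y :=
    ⟨_, List.getLast?_eq_getLast (l := b :: q) (by simp)⟩
  rw [hy]
  rfl

lemma decomp (l : List V) (z : V) (j : ℕ) (h : j + 2 < l.length) :
    l = l.take j ++ l.getD j z :: l.getD (j+1) z :: l.getD (j+2) z :: l.drop (j+3) := by
  rw [List.getD_eq_getElem l z (by omega), List.getD_eq_getElem l z (by omega),
      List.getD_eq_getElem l z h]
  conv_lhs => rw [← List.take_append_drop j l]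
  congr 1
  rw [List.drop_eq_getElem_cons (show j < l.length by omega),
      List.drop_eq_getElem_cons (show j + 1 < l.length by omega),
      List.drop_eq_getElem_cons (show j + 2 < l.length by omega)]

variable [DecidableEq V]

lemma cnt3 (p q : List V) (a x b y : V) : (p ++ a :: x :: b :: q).count y =
    p.count y + q.count y +
      ((if a = y then 1 else 0) + (if x = y then 1 else 0) + (if b = y then 1 else 0)) := by
  simp only [List.count_append, List.count_cons, beq_iff_eq]
  ring

lemma cnt2 (p q : List V) (a b y : V) : (p ++ a :: b :: q).count y =
    p.count y + q.count y + ((if a = y then 1 else 0) + (if b = y then 1 else 0)) := by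
  simp only [List.count_append, List.count_cons, beq_iff_eq]
  ring

lemma two_le_count_of_getD_eq (l : List V) (z : V) (i jj : ℕ)
    (hij : i < jj) (hj : jj < l.length) (he : l.getD i z = l.getD jj z) :
    2 ≤ l.count (l.getD i z) := by
  have hi : i < l.length := lt_trans hij hj
  rw [List.getD_eq_getElem l z hi] at he ⊢
  rw [List.getD_eq_getElem l z hj] at he
  have h1 : l[i] ∈ l.take jj := by
    have e : (l.take jj)[i]'(by simp [List.length_take]; omega) = l[i] := List.getElem_take
    exact e ▸ List.getElem_mem _
  have h2 : l[i] ∈ l.drop jj := by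
    rw [he]
    refine List.mem_iff_getElem.mpr ⟨0, by simp [List.length_drop]; omega, ?_⟩
    rw [List.getElem_drop]
    simp
  have c1 := List.count_pos_iff.mpr h1
  have c2 := List.count_pos_iff.mpr h2
  have hsum : (l.take jj).count l[i] + (l.drop jj).count l[i] = l.count l[i] := by
    rw [← List.count_append, List.take_append_drop]
  omega

lemma exists_shortcut_index (N : Finset V) (z : V)
    (hn : 3 ≤ N.card) (m : ℕ) (l : List V)
    (hlen : l.length = m + 1)
    (hchain : l.Chain' (· ≠ ·)) (hmem : ∀ x ∈ l, x ∈ N)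
    (hcov : ∀ t ∈ N, t ∈ l) (hm : N.card + 1 ≤ m) :
    ∃ j, j + 2 ≤ m ∧ l.getD j z ≠ l.getD (j+2) z ∧ 2 ≤ l.count (l.getD (j+1) z) := by
  have hne : l ≠ [] := by intro h; rw [h] at hlen; simp at hlen
  have htl : l.tail.length = m := by rw [List.length_tail, hlen]; omega
  -- step 1: find an interior duplicated vertex
  have hnotnd : ¬ l.tail.Nodup := by
    intro hnd
    have h1 : l.tail.toFinset.card = l.tail.length := List.toFinset_card_of_nodup hnd
    have h2 : l.tail.toFinset ⊆ N := by
      intro y hy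
      exact hmem y (List.mem_of_mem_tail (List.mem_toFinset.mp hy))
    have := Finset.card_le_card h2
    omega
  rw [List.nodup_iff_count_le_one] at hnotnd
  push_neg at hnotnd
  obtain ⟨x, hx⟩ := hnotnd
  have hxtake : x ∈ l.tail.take (m - 1) := by
    have h1 : List.count x (l.tail.take (m-1)) + List.count x (l.tail.drop (m-1))
        = List.count x l.tail := by
      rw [← List.count_append, List.take_append_drop]
    have h2 := List.count_le_length (a := x) (l := l.tail.drop (m-1))
    have h3 : (l.tail.drop (m-1)).length = 1 := by rw [List.length_drop, htl]; omega
    have : 0 < List.count x (l.tail.take (m-1)) := by omega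
    exact List.count_pos_iff.mp this
  obtain ⟨t0, ht0, hxt0⟩ := List.mem_iff_getElem.mp hxtake
  have hlt : t0 < m - 1 := by
    rw [List.length_take, htl] at ht0
    omega
  have hx1 : l.getD (t0 + 1) z = x := by
    rw [List.getD_eq_getElem l z (by omega)]
    have h2 : (l.tail.take (m-1))[t0] = l.tail[t0]'(by omega) := List.getElem_take
    have h3 : l.tail[t0]'(by omega) = l[t0 + 1]'(by omega) := List.getElem_tail _
    rw [h2, h3] at hxt0
    exact hxt0
  have hcnt2 : 2 ≤ l.count x := le_trans hx ((List.tail_sublist l).count_le x)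
  have hbase : 2 ≤ l.count (l.getD (t0 + 1) z) := by rw [hx1]; exact hcnt2
  by_contra hcon
  push_neg at hcon
  have H' : ∀ p, p + 2 ≤ m → 2 ≤ l.count (l.getD (p+1) z) → l.getD p z = l.getD (p+2) z := by
    intro p hp hc
    by_contra hne'
    have := hcon p hp hne'
    omega
  have hj2 : t0 + 2 ≤ m := by omega
  -- forward propagation
  have F : ∀ p, t0 ≤ p → p + 2 ≤ m →
      l.getD p z = l.getD (p+2) z ∧ 2 ≤ l.count (l.getD (p+1) z) := by
    intro p hp
    induction p, hp using Nat.le_induction with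
    | base => intro h2; exact ⟨H' t0 h2 hbase, hbase⟩
    | succ p hp ih =>
      intro h2
      obtain ⟨heq, hc⟩ := ih (by omega)
      have hc2 : 2 ≤ l.count (l.getD (p+2) z) := by
        have h4 := two_le_count_of_getD_eq l z p (p+2) (by omega) (by omega) heq
        rw [heq] at h4
        exact h4
      exact ⟨H' (p+1) h2 hc2, hc2⟩
  -- backward propagation
  have B : ∀ t, t ≤ t0 →
      l.getD (t0 - t) z = l.getD (t0 - t + 2) z ∧ 2 ≤ l.count (l.getD (t0 - t + 1) z) := by
    intro t
    induction t with
    | zero =>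
      intro _
      exact ⟨H' t0 hj2 hbase, hbase⟩
    | succ t ih =>
      intro ht
      obtain ⟨heq, hc⟩ := ih (by omega)
      have hc2 : 2 ≤ l.count (l.getD (t0 - t) z) :=
        two_le_count_of_getD_eq l z (t0 - t) (t0 - t + 2) (by omega) (by omega) heq
      have e1 : t0 - (t+1) = t0 - t - 1 := by omega
      have e3 : t0 - t - 1 + 1 = t0 - t := by omega
      rw [e1]
      constructor
      · exact H' (t0 - t - 1) (by omega) (by rw [e3]; exact hc2)
      · rw [e3]; exact hc2
  have C : ∀ p, p + 2 ≤ m → l.getD p z = l.getD (p+2) z := by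
    intro p hp
    rcases le_or_gt t0 p with h | h
    · exact (F p h hp).1
    · have hB := (B (t0 - p) (by omega)).1
      have e : t0 - (t0 - p) = p := by omega
      rw [e] at hB
      exact hB
  have D : ∀ p, p ≤ m → (l.getD p z = l.getD 0 z ∨ l.getD p z = l.getD 1 z) := by
    intro p
    induction p using Nat.strong_induction_on with
    | _ p ih =>
      intro hp
      rcases Nat.lt_or_ge p 2 with h2 | h2
      · interval_cases p
        · exact Or.inl rfl
        · exact Or.inr rfl
      · obtain ⟨q, rfl⟩ : ∃ q, p = q + 2 := ⟨p - 2, by omega⟩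
        have hC := C q (by omega)
        rcases ih q (by omega) (by omega) with h | h
        · exact Or.inl (hC.symm.trans h)
        · exact Or.inr (hC.symm.trans h)
  have hsub : N ⊆ {l.getD 0 z, l.getD 1 z} := by
    intro t ht
    obtain ⟨i, hi, hgi⟩ := List.mem_iff_getElem.mp (hcov t ht)
    have e : l.getD i z = t := by rw [List.getD_eq_getElem l z hi, hgi]
    have hD := D i (by omega)
    rw [e] at hD
    simpa [Finset.mem_insert, Finset.mem_singleton] using hD
  have h1 := Finset.card_le_card hsub
  have h2 : ({l.getD 0 z, l.getD 1 z} : Finset V).card ≤ 2 := by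
    apply le_trans (Finset.card_insert_le _ _)
    simp
  omega

lemma reduce_step (c : V → V → ℝ)
    (htri : ∀ x y z, c x z ≤ c x y + c y z)
    (N : Finset V) (hn : 3 ≤ N.card) (m : ℕ) (hm : N.card ≤ m)
    (l : List V) (h : IsRevSeqND N (m+1) l) :
    ∃ l', IsRevSeqND N m l' ∧ chainCost c l' ≤ chainCost c l := by
  obtain ⟨hlen, hclosed, hchain, hmem, hcov⟩ := h
  obtain ⟨z, hz⟩ := Finset.card_pos.mp (show 0 < N.card by omega)
  obtain ⟨j, hj2, hne, hcount⟩ :=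
    exists_shortcut_index N z hn (m+1) l hlen hchain hmem hcov (by omega)
  have hdec := decomp l z j (by omega)
  set p := l.take j with hp
  set q := l.drop (j+3) with hq
  set a := l.getD j z with ha
  set x := l.getD (j+1) z with hxdef
  set b := l.getD (j+2) z with hb
  have hxm : x ∈ p ++ a :: b :: q := by
    rw [hdec, cnt3] at hcount
    rw [if_pos rfl] at hcount
    have hpos : 0 < (p ++ a :: b :: q).count x := by
      rw [cnt2]
      omega
    exact List.count_pos_iff.mp hpos
  refine ⟨p ++ a :: b :: q, ⟨?_, ?_, ?_, ?_, ?_⟩, ?_⟩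
  · have h1 : l.length = p.length + (3 + q.length) := by
        rw [hdec]; simp only [List.length_append, List.length_cons]; omega
    have h2 : (p ++ a :: b :: q).length = p.length + (2 + q.length) := by
        simp only [List.length_append, List.length_cons]; omega
    omega
  · have e1 : (p ++ a :: b :: q).head? = l.head? := by
      rw [hdec]; exact head?_mid p a _ _
    have e2 : (p ++ a :: b :: q).getLast? = l.getLast? := by
      rw [hdec]
      have r1 : p ++ a :: b :: q = (p ++ [a]) ++ b :: q := by simp
      have r2 : p ++ a :: x :: b :: q = (p ++ [a, x]) ++ b :: q := by simp
      rw [r1, r2]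
      exact getLast?_mid _ _ b q
    rw [e1, e2]
    exact hclosed
  · rw [hdec] at hchain
    rw [List.Chain', List.isChain_append] at hchain ⊢
    obtain ⟨h1, h2, h3⟩ := hchain
    refine ⟨h1, ?_, ?_⟩
    · rw [List.isChain_cons_cons] at h2 ⊢
      exact ⟨hne, (List.isChain_cons_cons.mp h2.2).2⟩
    · exact fun y hy w hw => h3 y hy w (by simpa using hw)
  · intro y hy
    apply hmem
    rw [hdec]
    simp only [List.mem_append, List.mem_cons] at hy ⊢
    tauto
  · intro t ht
    have h0 := hcov t ht
    rw [hdec] at h0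
    simp only [List.mem_append, List.mem_cons] at h0 ⊢
    rcases h0 with h | h | h | h | h
    · tauto
    · tauto
    · rw [h]
      simpa [List.mem_append, List.mem_cons] using hxm
    · tauto
    · tauto
  · calc chainCost c (p ++ a :: b :: q) ≤ chainCost c (p ++ a :: x :: b :: q) :=
        cost_shortcut1 c htri p q a x b
      _ = chainCost c l := by rw [← hdec]

lemma ND_card_le (N : Finset V) (m : ℕ) (l : List V)
    (hn : 3 ≤ N.card) (h : IsRevSeqND N m l) : N.card ≤ m := by
  obtain ⟨hlen, hclosed, _, _, hcov⟩ := h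
  rcases l with _ | ⟨w, l1⟩
  · simp at hlen
  rcases l1 with _ | ⟨y, l2⟩
  · have hsub : N ⊆ {w} := by
      intro t ht
      have := hcov t ht
      simp at this
      simp [this]
    have := Finset.card_le_card hsub
    simp at this
    omega
  · have hne2 : (w :: y :: l2 : List V) ≠ [] := by simp
    have hlast : (w :: y :: l2).getLast hne2 = w := by
      have h1 : some w = some ((w :: y :: l2).getLast hne2) := by
        rw [show (some w : Option V) = (w :: y :: l2).head? from rfl, hclosed]
        exact List.getLast?_eq_getLast hne2
      exact (Option.some.inj h1).symm
    have hsub : N ⊆ ((w :: y :: l2).dropLast).toFinset := by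
      intro t ht
      have h2 := hcov t ht
      conv at h2 => rw [← List.dropLast_append_getLast hne2]
      rw [List.mem_append] at h2
      rw [List.mem_toFinset]
      rcases h2 with h2 | h2
      · exact h2
      · rw [List.mem_singleton] at h2
        rw [h2, hlast, List.dropLast_cons₂]
        exact List.mem_cons_self
    have h3 := Finset.card_le_card hsub
    have h4 := List.toFinset_card_le ((w :: y :: l2).dropLast)
    have h5 : ((w :: y :: l2).dropLast).length = (w :: y :: l2).length - 1 :=
      List.length_dropLast
    simp only [List.length_cons] at hlen h5
    omega

lemma depot_removal (c : V → V → ℝ)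
    (hnonneg : ∀ x y, 0 ≤ c x y) (htri : ∀ x y z, c x z ≤ c x y + c y z)
    (N : Finset V) (d : V) (hd : d ∉ N) (v : ℕ) (l : List V)
    (h : IsRevSeqD N d v l) :
    ∃ m l', (m + 2 = v ∨ m + 1 = v) ∧ IsRevSeqND N m l' ∧
      chainCost c l' ≤ chainCost c l := by
  obtain ⟨hlen, hclosed, hchain, hmem, hcov, hcnt, u0, hu0, hhead⟩ := h
  have hdmem : d ∈ l := List.count_pos_iff.mp (by rw [hcnt]; omega)
  obtain ⟨i, hi, hgi⟩ := List.mem_iff_getElem.mp hdmem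
  have hnil : l ≠ [] := List.ne_nil_of_length_pos (by omega)
  have hhead2 : l.head? = some (l.head hnil) := List.head?_eq_head hnil
  have hu0e : l.head hnil = u0 := by
    rw [hhead2] at hhead
    exact Option.some.inj hhead
  have hiv0 : i ≠ 0 := by
    intro e
    subst e
    apply hd
    rw [List.getElem_zero (by omega), hu0e] at hgi
    rw [← hgi]
    exact hu0
  have hivv : i ≠ v := by
    intro e
    subst e
    have hlastv : l.getLast? = some (l[i]'hi) := by
      rw [List.getLast?_eq_getLast hnil]
      congr 1
      rw [List.getLast_eq_getElem hnil]
      congr 1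
      omega
    rw [← hclosed, hhead] at hlastv
    apply hd
    rw [← hgi, ← Option.some.inj hlastv]
    exact hu0
  obtain ⟨j, rfl⟩ : ∃ j, i = j + 1 := ⟨i - 1, by omega⟩
  have hj2 : j + 2 ≤ v := by omega
  have hdec := decomp l d j (by omega)
  have hxd : l.getD (j+1) d = d := by
    rw [List.getD_eq_getElem l d (by omega)]
    exact hgi
  rw [hxd] at hdec
  set p := l.take j with hp
  set q := l.drop (j+3) with hq
  set a := l.getD j d with ha
  set b := l.getD (j+2) d with hb
  have hcnt' := hcnt
  rw [hdec, cnt3, if_pos rfl] at hcnt'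
  have had : a ≠ d := by intro e; rw [if_pos e] at hcnt'; omega
  have hbd : b ≠ d := by intro e; rw [if_pos e] at hcnt'; omega
  rw [if_neg had, if_neg hbd] at hcnt'
  have hpd : d ∉ p := by
    intro hmem'
    have := List.count_pos_iff.mpr hmem'
    omega
  have hqd : d ∉ q := by
    intro hmem'
    have := List.count_pos_iff.mpr hmem'
    omega
  by_cases hab : a = b
  · -- neighbors of depot coincide: remove depot and one neighbor
    refine ⟨v - 2, p ++ a :: q, Or.inl (by omega), ⟨?_, ?_, ?_, ?_, ?_⟩, ?_⟩
    · have h1 : l.length = p.length + (3 + q.length) := by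
        rw [hdec]; simp only [List.length_append, List.length_cons]; omega
      have h2 : (p ++ a :: q).length = p.length + (1 + q.length) := by
        simp only [List.length_append, List.length_cons]; omega
      omega
    · have e1 : (p ++ a :: q).head? = l.head? := by
        rw [hdec]; exact head?_mid p a _ _
      have e2 : (p ++ a :: q).getLast? = l.getLast? := by
        rw [hdec]
        rcases q with _ | ⟨y, q'⟩
        · rw [List.getLast?_append, List.getLast?_append]
          simp [hab]
        · have r1 : p ++ a :: y :: q' = (p ++ [a]) ++ y :: q' := by simp
          have r2 : p ++ a :: d :: b :: y :: q' = (p ++ [a, d, b]) ++ y :: q' := by simp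
          rw [r1, r2]
          exact getLast?_mid _ _ y q'
      rw [e1, e2]
      exact hclosed
    · rw [hdec] at hchain
      rw [List.Chain', List.isChain_append] at hchain ⊢
      obtain ⟨h1, h2, h3⟩ := hchain
      refine ⟨h1, ?_, ?_⟩
      · rw [List.isChain_cons_cons] at h2
        have h4 := (List.isChain_cons_cons.mp h2.2).2
        rw [hab]
        exact h4
      · exact fun yy hyy ww hww => h3 yy hyy ww (by simpa using hww)
    · intro y hy
      have hyl : y ∈ l := by
        rw [hdec]
        simp only [List.mem_append, List.mem_cons] at hy ⊢
        tauto
      rcases hmem y hyl with h | h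
      · exact h
      · exfalso
        subst h
        simp only [List.mem_append, List.mem_cons] at hy
        rcases hy with h | h | h
        exacts [hpd h, had h.symm, hqd h]
    · intro t ht
      have h2 := hcov t ht
      rw [hdec] at h2
      simp only [List.mem_append, List.mem_cons] at h2 ⊢
      rcases h2 with h | h | h | h | h
      · tauto
      · tauto
      · exact absurd (h ▸ ht) hd
      · exact Or.inr (Or.inl (h.trans hab.symm))
      · tauto
    · calc chainCost c (p ++ a :: q) ≤ chainCost c (p ++ a :: d :: a :: q) :=
          cost_shortcut2 c hnonneg p q a d
        _ = chainCost c l := by rw [hdec, ← hab]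
  · -- neighbors distinct: just remove the depot
    refine ⟨v - 1, p ++ a :: b :: q, Or.inr (by omega), ⟨?_, ?_, ?_, ?_, ?_⟩, ?_⟩
    · have h1 : l.length = p.length + (3 + q.length) := by
        rw [hdec]; simp only [List.length_append, List.length_cons]; omega
      have h2 : (p ++ a :: b :: q).length = p.length + (2 + q.length) := by
        simp only [List.length_append, List.length_cons]; omega
      omega
    · have e1 : (p ++ a :: b :: q).head? = l.head? := by
        rw [hdec]; exact head?_mid p a _ _
      have e2 : (p ++ a :: b :: q).getLast? = l.getLast? := by
        rw [hdec]
        have r1 : p ++ a :: b :: q = (p ++ [a]) ++ b :: q := by simp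
        have r2 : p ++ a :: d :: b :: q = (p ++ [a, d]) ++ b :: q := by simp
        rw [r1, r2]
        exact getLast?_mid _ _ b q
      rw [e1, e2]
      exact hclosed
    · rw [hdec] at hchain
      rw [List.Chain', List.isChain_append] at hchain ⊢
      obtain ⟨h1, h2, h3⟩ := hchain
      refine ⟨h1, ?_, ?_⟩
      · rw [List.isChain_cons_cons] at h2 ⊢
        exact ⟨hab, (List.isChain_cons_cons.mp h2.2).2⟩
      · exact fun yy hyy ww hww => h3 yy hyy ww (by simpa using hww)
    · intro y hy
      have hyl : y ∈ l := by
        rw [hdec]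
        simp only [List.mem_append, List.mem_cons] at hy ⊢
        tauto
      rcases hmem y hyl with h | h
      · exact h
      · exfalso
        subst h
        simp only [List.mem_append, List.mem_cons] at hy
        rcases hy with h | h | h | h
        exacts [hpd h, had h.symm, hbd h.symm, hqd h]
    · intro t ht
      have h2 := hcov t ht
      rw [hdec] at h2
      simp only [List.mem_append, List.mem_cons] at h2 ⊢
      rcases h2 with h | h | h | h | h
      · tauto
      · tauto
      · exact absurd (h ▸ ht) hd
      · tauto
      · tauto
    · calc chainCost c (p ++ a :: b :: q) ≤ chainCost c (p ++ a :: d :: b :: q) :=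
          cost_shortcut1 c htri p q a d b
        _ = chainCost c l := by rw [← hdec]

lemma descend (c : V → V → ℝ)
    (htri : ∀ x y z, c x z ≤ c x y + c y z)
    (N : Finset V) (hn : 3 ≤ N.card) :
    ∀ (mm k : ℕ), N.card ≤ k → ∀ l, IsRevSeqND N (k + mm) l →
      ∃ l', IsRevSeqND N k l' ∧ chainCost c l' ≤ chainCost c l := by
  intro mm
  induction mm with
  | zero => exact fun k hk l h => ⟨l, h, le_refl _⟩
  | succ mm ih =>
    intro k hk l h
    obtain ⟨l1, h1, hc1⟩ := reduce_step c htri N hn (k+mm) (by omega) l h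
    obtain ⟨l2, h2, hc2⟩ := ih k hk l1 h1
    exact ⟨l2, h2, hc2.trans hc1⟩

end TDaux

/-- `TD*(k+c) ≥ T*(k)` for all `k ≥ n` and `c ≥ 2`; moreover
`TD*(n+1) ≥ T*(n)`. -/
theorem TDstar_ge_Tstar {V : Type*} [Fintype V] [DecidableEq V]
    (c : V → V → ℝ) (N : Finset V) (d : V) (hd : d ∉ N) (hn : 3 ≤ N.card)
    (hsymm : ∀ x y, c x y = c y x) (hnonneg : ∀ x y, 0 ≤ c x y)
    (htri : ∀ x y z, c x z ≤ c x y + c y z)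
    (T TD : ℕ → ℝ)
    (hT : ∀ v, N.card ≤ v →
      IsLeast {x | ∃ l, IsRevSeqND N v l ∧ chainCost c l = x} (T v))
    (hTD : ∀ v, N.card + 1 ≤ v →
      IsLeast {x | ∃ l, IsRevSeqD N d v l ∧ chainCost c l = x} (TD v)) :
    (∀ k c', N.card ≤ k → 2 ≤ c' → T k ≤ TD (k + c')) ∧
      T N.card ≤ TD (N.card + 1) := by
  constructor
  · intro k c' hk hc'
    obtain ⟨⟨l, hl, hcost⟩, hlb⟩ := hTD (k + c') (by omega)
    obtain ⟨m, l', hm, hND, hle⟩ := TDaux.depot_removal c hnonneg htri N d hd (k+c') l hl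
    have hmk : k ≤ m := by rcases hm with h | h <;> omega
    have hND' : IsRevSeqND N (k + (m - k)) l' := by
      rwa [Nat.add_sub_cancel' hmk]
    obtain ⟨l2, h2, hle2⟩ := TDaux.descend c htri N hn (m - k) k hk l' hND'
    have hlow : T k ≤ chainCost c l2 := (hT k hk).2 ⟨l2, h2, rfl⟩
    calc T k ≤ chainCost c l2 := hlow
      _ ≤ chainCost c l' := hle2
      _ ≤ chainCost c l := hle
      _ = TD (k + c') := hcost
  · obtain ⟨⟨l, hl, hcost⟩, hlb⟩ := hTD (N.card + 1) le_rfl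
    obtain ⟨m, l', hm, hND, hle⟩ :=
      TDaux.depot_removal c hnonneg htri N d hd (N.card + 1) l hl
    have hcard := TDaux.ND_card_le N m l' hn hND
    have hm' : m = N.card := by rcases hm with h | h <;> omega
    subst hm'
    have hlow : T N.card ≤ chainCost c l' := (hT N.card le_rfl).2 ⟨l', hND, rfl⟩
    calc T N.card ≤ chainCost c l' := hlow
      _ ≤ chainCost c l := hle
      _ = TD (N.card + 1) := hcost
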